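/- Let α₁ ≥ α₂ ≥ ... ≥ αₙ > 0 and v₁ ≥ ... ≥ vₙ ≥ 0 with v₁ > 0, and suppose vᵢ ≥ ((α_{i-1} - αₙ)/α_{i-1})·v₁ for all i ≥ 2. Then (α₁v₁ + Σ_{i>1} αᵢvᵢ)/(αₙv₁ + Σ_{i>1} α_{i-1}vᵢ) ≤ (α₁ + Σ_{i>1} αᵢ(α_{i-1}-αₙ)/α_{i-1})/(αₙ + Σ_{i>1} (α_{i-1}-αₙ)), assuming the denominators are positive. -/

import Mathlib

theorem tele_aux (α : ℕ → ℝ) : ∀ m, 1 ≤ m →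
    ∑ i ∈ Finset.Icc 2 m, (α (i - 1) - α i) = α 1 - α m := by
  intro m hm
  induction m with
  | zero => omega
  | succ k ih =>
    rcases Nat.lt_or_ge k 1 with h | h
    · interval_cases k
      · simp
    · rw [Finset.sum_Icc_succ_top (by omega), ih h]
      simp

theorem n_slot_reduction (n : ℕ) (hn : 2 ≤ n) (α v : ℕ → ℝ)
    (hαpos : ∀ i, 1 ≤ i → i ≤ n → 0 < α i)
    (hαmono : ∀ i j, 1 ≤ i → i ≤ j → j ≤ n → α j ≤ α i)
    (hvmono : ∀ i j, 1 ≤ i → i ≤ j → j ≤ n → v j ≤ v i)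
    (hvnonneg : ∀ i, 1 ≤ i → i ≤ n → 0 ≤ v i)
    (hv1 : 0 < v 1)
    (hnash : ∀ i, 2 ≤ i → i ≤ n → ((α (i - 1) - α n) / α (i - 1)) * v 1 ≤ v i)
    (hden1 : 0 < α n * v 1 + ∑ i ∈ Finset.Icc 2 n, α (i - 1) * v i)
    (hden2 : 0 < α n + ∑ i ∈ Finset.Icc 2 n, (α (i - 1) - α n)) :
    (α 1 * v 1 + ∑ i ∈ Finset.Icc 2 n, α i * v i) /
        (α n * v 1 + ∑ i ∈ Finset.Icc 2 n, α (i - 1) * v i) ≤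
      (α 1 + ∑ i ∈ Finset.Icc 2 n, α i * (α (i - 1) - α n) / α (i - 1)) /
        (α n + ∑ i ∈ Finset.Icc 2 n, (α (i - 1) - α n)) := by
  set t : ℕ → ℝ := fun i => (α (i - 1) - α n) / α (i - 1) with ht
  set ε : ℕ → ℝ := fun i => v i - t i * v 1 with hε
  set C : ℝ := α 1 + ∑ i ∈ Finset.Icc 2 n, α i * t i with hC
  set D : ℝ := α n + ∑ i ∈ Finset.Icc 2 n, (α (i - 1) - α n) with hD
  -- basic facts for each i in the range
  have hfacts : ∀ i ∈ Finset.Icc 2 n,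
      0 < α (i-1) ∧ α n ≤ α (i-1) ∧ α i ≤ α (i-1) ∧ 0 < α i ∧
      α (i-1) * t i = α (i-1) - α n ∧ 0 ≤ ε i ∧ t i ≤ 1 := by
    intro i hi
    simp only [Finset.mem_Icc] at hi
    obtain ⟨h2, hin⟩ := hi
    have h1 : 0 < α (i-1) := hαpos (i-1) (by omega) (by omega)
    have h2' : α n ≤ α (i-1) := hαmono (i-1) n (by omega) (by omega) le_rfl
    have h3 : α i ≤ α (i-1) := hαmono (i-1) i (by omega) (by omega) hin
    have h4 : 0 < α i := hαpos i (by omega) hin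
    have h5 : α (i-1) * t i = α (i-1) - α n := by
      rw [ht]; field_simp
    have h6 : 0 ≤ ε i := by
      have := hnash i h2 hin
      simp only [hε, ht]
      linarith
    have h7 : t i ≤ 1 := by
      rw [ht]
      have hαn : 0 < α n := hαpos n (by omega) le_rfl
      rw [div_le_one h1]
      linarith
    exact ⟨h1, h2', h3, h4, h5, h6, h7⟩
  -- C numerator form matches
  have hCeq : (α 1 + ∑ i ∈ Finset.Icc 2 n, α i * (α (i - 1) - α n) / α (i - 1)) = C := by
    rw [hC]
    congr 1
    refine Finset.sum_congr rfl fun i _ => ?_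
    rw [ht, mul_div_assoc]
  -- D ≤ C
  have hDC : D ≤ C := by
    have h1 : ∑ i ∈ Finset.Icc 2 n, ((α (i-1) - α n) - α i * t i)
        ≤ ∑ i ∈ Finset.Icc 2 n, (α (i-1) - α i) := by
      refine Finset.sum_le_sum fun i hi => ?_
      obtain ⟨p1, p2, p3, p4, p5, p6, p7⟩ := hfacts i hi
      have ht0 : 0 ≤ t i := by
        simp only [ht]; exact div_nonneg (by linarith) p1.le
      nlinarith [mul_le_one₀ p7 (by linarith : (0:ℝ) ≤ α (i-1) - α i)]
    have h2 : ∑ i ∈ Finset.Icc 2 n, (α (i-1) - α i) = α 1 - α n := tele_aux α n (by omega)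
    have h3 : ∑ i ∈ Finset.Icc 2 n, ((α (i-1) - α n) - α i * t i)
        = (∑ i ∈ Finset.Icc 2 n, (α (i-1) - α n)) - ∑ i ∈ Finset.Icc 2 n, α i * t i := by
      rw [Finset.sum_sub_distrib]
    rw [h3, h2] at h1
    rw [hC, hD]
    linarith
  -- decompositions
  have hA : α 1 * v 1 + ∑ i ∈ Finset.Icc 2 n, α i * v i
      = C * v 1 + ∑ i ∈ Finset.Icc 2 n, α i * ε i := by
    rw [hC, add_mul, Finset.sum_mul]
    have : ∑ i ∈ Finset.Icc 2 n, α i * v i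
        = ∑ i ∈ Finset.Icc 2 n, (α i * t i * v 1 + α i * ε i) := by
      refine Finset.sum_congr rfl fun i _ => ?_
      simp only [hε]; ring
    rw [this, Finset.sum_add_distrib]; ring
  have hB : α n * v 1 + ∑ i ∈ Finset.Icc 2 n, α (i-1) * v i
      = D * v 1 + ∑ i ∈ Finset.Icc 2 n, α (i-1) * ε i := by
    rw [hD, add_mul, Finset.sum_mul]
    have : ∑ i ∈ Finset.Icc 2 n, α (i-1) * v i
        = ∑ i ∈ Finset.Icc 2 n, ((α (i-1) - α n) * v 1 + α (i-1) * ε i) := by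
      refine Finset.sum_congr rfl fun i hi => ?_
      obtain ⟨p1, p2, p3, p4, p5, p6, p7⟩ := hfacts i hi
      simp only [hε]
      nlinarith [p5]
    rw [this, Finset.sum_add_distrib]; ring
  -- key inequality on the error terms
  have hEF : D * (∑ i ∈ Finset.Icc 2 n, α i * ε i)
      ≤ C * (∑ i ∈ Finset.Icc 2 n, α (i-1) * ε i) := by
    rw [Finset.mul_sum, Finset.mul_sum]
    refine Finset.sum_le_sum fun i hi => ?_
    obtain ⟨p1, p2, p3, p4, p5, p6, p7⟩ := hfacts i hi
    have hDpos : 0 < D := hden2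
    have : D * α i ≤ C * α (i-1) :=
      mul_le_mul hDC p3 (le_of_lt p4) (by linarith)
    nlinarith [this, p6]
  rw [hCeq, hA, hB]
  rw [div_le_div_iff₀ (by rw [← hB]; exact hden1) hden2]
  nlinarith [hEF]
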